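/- Let τ ⊆ ℂ² be a bounded set, and let φ_x, φ_y : ℂ² → ℂ² be the maps φ_x(x, y) = (xy, x) and φ_y(x, y) = (xy, y). Then Sup^rec(τ) ≤ ( Sup^hom(φ_x(τ)) )^{1/3} · ( Sup^hom(φ_y(τ)) )^{1/3}. -/

import Mathlib

open Filter
open scoped ENNReal

/-- The Vandermonde supremum `t_{(m_1,…,m_N)}(τ)`: the supremum over all tuples
`z : ι → S` of points of `τ` of the absolute value of the generalized Vandermonde
determinant `det (m j (z i))`, valued in `[0, ∞]`. -/
noncomputable def vandSup {S ι : Type*} [Fintype ι] [DecidableEq ι]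
    (τ : Set S) (m : ι → S → ℂ) : ℝ≥0∞ :=
  ⨆ (z : ι → S) (_ : ∀ i, z i ∈ τ),
    (‖(Matrix.of fun i j : ι => m j (z i)).det‖₊ : ℝ≥0∞)

/-- The rectangular supremal transfinite diameter of `τ ⊆ ℂ²`:
`limsup_n t_{R_n}(τ)^{1/(n²(n−1))}` where `R_n` is the list of the `n²` monomials
`(x, y) ↦ x^a y^b` with `0 ≤ a, b ≤ n − 1`. -/
noncomputable def supRec (τ : Set (ℂ × ℂ)) : ℝ≥0∞ :=
  limsup (fun n : ℕ =>
    vandSup τ (fun p : Fin n × Fin n => fun z : ℂ × ℂ =>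
        z.1 ^ (p.1 : ℕ) * z.2 ^ (p.2 : ℕ))
      ^ (1 / ((n : ℝ) ^ 2 * ((n : ℝ) - 1)))) atTop

/-- The homogeneous supremal transfinite diameter of `τ ⊆ ℂ²`:
`limsup_n t_{H_n}(τ)^{3/(n(n−1)(n+1))}` where `H_n` is the list of the `n(n+1)/2`
monomials `(x, y) ↦ x^a y^b` with `a + b ≤ n − 1`. -/
noncomputable def supHom (τ : Set (ℂ × ℂ)) : ℝ≥0∞ :=
  limsup (fun n : ℕ =>
    vandSup τ (fun p : {p : Fin n × Fin n // (p.1 : ℕ) + (p.2 : ℕ) < n} =>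
        fun z : ℂ × ℂ => z.1 ^ (p.1.1 : ℕ) * z.2 ^ (p.1.2 : ℕ))
      ^ (3 / ((n : ℝ) * ((n : ℝ) - 1) * ((n : ℝ) + 1)))) atTop

section Auxiliary

open Equiv
open scoped NNReal Topology

lemma laplace_avg {R : Type*} [CommRing R] {α β : Type*} [Fintype α] [Fintype β]
    [DecidableEq α] [DecidableEq β] (M : Matrix (α ⊕ β) (α ⊕ β) R) :
    ((Nat.factorial (Fintype.card α) * Nat.factorial (Fintype.card β) : ℕ) : R) * M.det
      = ∑ π : Equiv.Perm (α ⊕ β),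
          ((Equiv.Perm.sign π : ℤ) : R)
            * (Matrix.of fun a a' : α => M (π (Sum.inl a)) (Sum.inl a')).det
            * (Matrix.of fun b b' : β => M (π (Sum.inr b)) (Sum.inr b')).det := by
  symm
  have key : ∀ π : Equiv.Perm (α ⊕ β),
      ((Equiv.Perm.sign π : ℤ) : R)
            * (Matrix.of fun a a' : α => M (π (Sum.inl a)) (Sum.inl a')).det
            * (Matrix.of fun b b' : β => M (π (Sum.inr b)) (Sum.inr b')).det
      = ∑ σ : Equiv.Perm α, ∑ τ : Equiv.Perm β,
          ((Equiv.Perm.sign (π * Equiv.sumCongr σ τ) : ℤ) : R)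
            * ∏ j, M ((π * Equiv.sumCongr σ τ) j) j := by
    intro π
    rw [Matrix.det_apply, Matrix.det_apply, mul_assoc, Finset.sum_mul_sum,
      Finset.mul_sum]
    refine Finset.sum_congr rfl fun σ _ => ?_
    rw [Finset.mul_sum]
    refine Finset.sum_congr rfl fun τ _ => ?_
    have hprod : ∏ j, M ((π * Equiv.sumCongr σ τ) j) j
        = (∏ a : α, M (π (Sum.inl (σ a))) (Sum.inl a))
          * ∏ b : β, M (π (Sum.inr (τ b))) (Sum.inr b) := by
      rw [Fintype.prod_sum_type]
      rfl
    rw [hprod]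
    simp only [Equiv.Perm.sign_mul, Equiv.Perm.sign_sumCongr, Units.smul_def,
      zsmul_eq_mul, Matrix.of_apply, Units.val_mul, Int.cast_mul]
    ring
  calc
    ∑ π : Equiv.Perm (α ⊕ β),
          ((Equiv.Perm.sign π : ℤ) : R)
            * (Matrix.of fun a a' : α => M (π (Sum.inl a)) (Sum.inl a')).det
            * (Matrix.of fun b b' : β => M (π (Sum.inr b)) (Sum.inr b')).det
        = ∑ π : Equiv.Perm (α ⊕ β), ∑ σ : Equiv.Perm α, ∑ τ : Equiv.Perm β,
            ((Equiv.Perm.sign (π * Equiv.sumCongr σ τ) : ℤ) : R)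
              * ∏ j, M ((π * Equiv.sumCongr σ τ) j) j :=
      Finset.sum_congr rfl fun π _ => key π
    _ = ∑ σ : Equiv.Perm α, ∑ τ : Equiv.Perm β, ∑ π : Equiv.Perm (α ⊕ β),
            ((Equiv.Perm.sign (π * Equiv.sumCongr σ τ) : ℤ) : R)
              * ∏ j, M ((π * Equiv.sumCongr σ τ) j) j := by
      rw [Finset.sum_comm]
      refine Finset.sum_congr rfl fun σ _ => Finset.sum_comm
    _ = ∑ _σ : Equiv.Perm α, ∑ _τ : Equiv.Perm β, M.det := by
      refine Finset.sum_congr rfl fun σ _ => Finset.sum_congr rfl fun τ _ => ?_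
      rw [Matrix.det_apply]
      rw [← Equiv.sum_comp (Equiv.mulRight (Equiv.sumCongr σ τ : Equiv.Perm (α ⊕ β)))
        (fun ρ : Equiv.Perm (α ⊕ β) => Equiv.Perm.sign ρ • ∏ j, M (ρ j) j)]
      refine Finset.sum_congr rfl fun π _ => ?_
      simp [Units.smul_def, zsmul_eq_mul]
    _ = ((Nat.factorial (Fintype.card α) * Nat.factorial (Fintype.card β) : ℕ) : R)
          * M.det := by
      simp [Finset.sum_const, Fintype.card_perm, nsmul_eq_mul]
      ring

lemma det_split_nnnorm_le {α β : Type*} [Fintype α] [Fintype β]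
    [DecidableEq α] [DecidableEq β] (M : Matrix (α ⊕ β) (α ⊕ β) ℂ) :
    ‖M.det‖₊ ≤ ∑ π : Equiv.Perm (α ⊕ β),
      ‖(Matrix.of fun a a' : α => M (π (Sum.inl a)) (Sum.inl a')).det‖₊
        * ‖(Matrix.of fun b b' : β => M (π (Sum.inr b)) (Sum.inr b')).det‖₊ := by
  have h1 : (1 : ℝ≥0) ≤ ((Nat.factorial (Fintype.card α)
      * Nat.factorial (Fintype.card β) : ℕ) : ℝ≥0) := by
    exact_mod_cast Nat.one_le_iff_ne_zero.2 (by positivity)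
  calc ‖M.det‖₊ ≤ ((Nat.factorial (Fintype.card α)
        * Nat.factorial (Fintype.card β) : ℕ) : ℝ≥0) * ‖M.det‖₊ :=
        le_mul_of_one_le_left zero_le h1
    _ = ‖((Nat.factorial (Fintype.card α)
        * Nat.factorial (Fintype.card β) : ℕ) : ℂ) * M.det‖₊ := by
        rw [nnnorm_mul]
        congr 1
        simp
    _ = ‖∑ π : Equiv.Perm (α ⊕ β),
          ((Equiv.Perm.sign π : ℤ) : ℂ)
            * (Matrix.of fun a a' : α => M (π (Sum.inl a)) (Sum.inl a')).det
            * (Matrix.of fun b b' : β => M (π (Sum.inr b)) (Sum.inr b')).det‖₊ := by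
        rw [laplace_avg]
    _ ≤ ∑ π : Equiv.Perm (α ⊕ β),
        ‖((Equiv.Perm.sign π : ℤ) : ℂ)
            * (Matrix.of fun a a' : α => M (π (Sum.inl a)) (Sum.inl a')).det
            * (Matrix.of fun b b' : β => M (π (Sum.inr b)) (Sum.inr b')).det‖₊ :=
        nnnorm_sum_le _ _
    _ ≤ _ := by
        refine Finset.sum_le_sum fun π _ => ?_
        rw [nnnorm_mul, nnnorm_mul]
        have : ‖((Equiv.Perm.sign π : ℤ) : ℂ)‖₊ = 1 := by
          rcases Int.units_eq_one_or (Equiv.Perm.sign π) with h | h <;> rw [h] <;> simp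
        rw [this, one_mul]

lemma le_vandSup {S ι : Type*} [Fintype ι] [DecidableEq ι] {τ : Set S}
    (m : ι → S → ℂ) (z : ι → S) (hz : ∀ i, z i ∈ τ) :
    (‖(Matrix.of fun i j : ι => m j (z i)).det‖₊ : ℝ≥0∞) ≤ vandSup τ m :=
  le_iSup_of_le z (le_iSup_of_le hz le_rfl)

lemma vandSup_le {S ι : Type*} [Fintype ι] [DecidableEq ι] {τ : Set S}
    {m : ι → S → ℂ} {C : ℝ≥0∞}
    (h : ∀ z : ι → S, (∀ i, z i ∈ τ) →
      (‖(Matrix.of fun i j : ι => m j (z i)).det‖₊ : ℝ≥0∞) ≤ C) :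
    vandSup τ m ≤ C :=
  iSup₂_le h

lemma vandSup_le_of_bound {S ι : Type*} [Fintype ι] [DecidableEq ι] {τ : Set S}
    {m : ι → S → ℂ} {E : ℝ≥0} (h : ∀ j (z : S), z ∈ τ → ‖m j z‖₊ ≤ E) :
    vandSup τ m ≤ ((Nat.factorial (Fintype.card ι) : ℕ) : ℝ≥0∞)
      * ((E : ℝ≥0∞)) ^ (Fintype.card ι) := by
  refine vandSup_le fun z hz => ?_
  have : ‖(Matrix.of fun i j : ι => m j (z i)).det‖₊
      ≤ (Nat.factorial (Fintype.card ι) : ℝ≥0) * E ^ (Fintype.card ι) := by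
    rw [Matrix.det_apply]
    refine le_trans (nnnorm_sum_le _ _) ?_
    have hcard : (Finset.univ : Finset (Equiv.Perm ι)).card
        = Nat.factorial (Fintype.card ι) := by
      rw [Finset.card_univ, Fintype.card_perm]
    calc ∑ π : Equiv.Perm ι, ‖Equiv.Perm.sign π •
          ∏ i, (Matrix.of fun i j : ι => m j (z i)) (π i) i‖₊
        ≤ ∑ _π : Equiv.Perm ι, E ^ (Fintype.card ι) := by
          refine Finset.sum_le_sum fun π _ => ?_
          have : ‖Equiv.Perm.sign π •
              ∏ i, (Matrix.of fun i j : ι => m j (z i)) (π i) i‖₊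
              = ‖∏ i, (Matrix.of fun i j : ι => m j (z i)) (π i) i‖₊ := by
            rcases Int.units_eq_one_or (Equiv.Perm.sign π) with h' | h' <;>
              rw [h'] <;> simp [Units.smul_def]
          rw [this, nnnorm_prod]
          calc ∏ i, ‖(Matrix.of fun i j : ι => m j (z i)) (π i) i‖₊
              ≤ ∏ _i : ι, E := Finset.prod_le_prod' fun i _ => h i (z (π i)) (hz _)
            _ = E ^ (Fintype.card ι) := by
                rw [Finset.prod_const, Finset.card_univ]
    _ = (Nat.factorial (Fintype.card ι) : ℝ≥0) * E ^ (Fintype.card ι) := by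
          rw [Finset.sum_const, hcard, nsmul_eq_mul]
  calc (‖(Matrix.of fun i j : ι => m j (z i)).det‖₊ : ℝ≥0∞)
      ≤ ((Nat.factorial (Fintype.card ι) : ℝ≥0) * E ^ (Fintype.card ι) : ℝ≥0) := by
        exact_mod_cast this
    _ = _ := by push_cast; ring

/-- `(a,b)` with `b ≤ a < n`  ↔  `(c,d)` with `c+d < n`, via `(c,d) = (b, a-b)`. -/
def txEquiv (n : ℕ) :
    {p : Fin n × Fin n // (p.2 : ℕ) ≤ (p.1 : ℕ)}
      ≃ {p : Fin n × Fin n // (p.1 : ℕ) + (p.2 : ℕ) < n} where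
  toFun q :=
    ⟨(q.1.2, ⟨(q.1.1 : ℕ) - (q.1.2 : ℕ), by have := q.1.1.isLt; omega⟩), by
      have := q.1.1.isLt; have := q.2; simp; omega⟩
  invFun q :=
    ⟨(⟨(q.1.1 : ℕ) + (q.1.2 : ℕ), by have := q.2; omega⟩, q.1.1), by simp⟩
  left_inv q := by
    have h1 := q.1.1.isLt
    have h2 := q.2
    apply Subtype.ext
    apply Prod.ext <;> apply Fin.ext <;> simp <;> omega
  right_inv q := by
    have h1 := q.2
    apply Subtype.ext
    apply Prod.ext <;> apply Fin.ext <;> simp <;> omega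

/-- `(a,b)` with `a < b < n`  ↔  `(c,d)` with `c+d < n-1`, via `(c,d) = (a, b-a-1)`. -/
def tyEquiv (n : ℕ) :
    {p : Fin n × Fin n // ¬ ((p.2 : ℕ) ≤ (p.1 : ℕ))}
      ≃ {p : Fin (n-1) × Fin (n-1) // (p.1 : ℕ) + (p.2 : ℕ) < n - 1} where
  toFun q :=
    ⟨(⟨(q.1.1 : ℕ), by have := q.1.2.isLt; have := q.2; omega⟩,
      ⟨(q.1.2 : ℕ) - (q.1.1 : ℕ) - 1, by have := q.1.2.isLt; have := q.2; omega⟩), by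
      have := q.1.2.isLt; have := q.2; simp; omega⟩
  invFun q :=
    ⟨(⟨(q.1.1 : ℕ), by have := q.1.1.isLt; omega⟩,
      ⟨(q.1.1 : ℕ) + (q.1.2 : ℕ) + 1, by have := q.2; omega⟩), by simp⟩
  left_inv q := by
    have h1 := q.1.2.isLt
    have h2 := q.2
    apply Subtype.ext
    apply Prod.ext <;> apply Fin.ext <;> simp <;> omega
  right_inv q := by
    have h1 := q.2
    apply Subtype.ext
    apply Prod.ext <;> apply Fin.ext <;> simp <;> omega

lemma pow_split1 (u v : ℂ) (a b : ℕ) (h : b ≤ a) :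
    u ^ a * v ^ b = (u * v) ^ b * u ^ (a - b) := by
  rw [mul_pow, mul_right_comm, ← pow_add, Nat.add_sub_cancel' h]

lemma pow_split2 (u v : ℂ) (a b : ℕ) (h : a < b) :
    u ^ a * v ^ b = v * ((u * v) ^ a * v ^ (b - a - 1)) := by
  have hb : b = a + (b - a - 1) + 1 := by omega
  conv_lhs => rw [hb]
  ring

lemma vandSup_reindex_le {S ι κ : Type*} [Fintype ι] [DecidableEq ι]
    [Fintype κ] [DecidableEq κ] {τ : Set S} (e : ι ≃ κ) (m : κ → S → ℂ) :
    vandSup τ (fun i => m (e i)) ≤ vandSup τ m := by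
  refine vandSup_le fun z hz => ?_
  have hmat : (Matrix.of fun i j : ι => m (e j) (z i))
      = (Matrix.of fun i' j' : κ => m j' (z (e.symm i'))).submatrix e e := by
    ext i j
    simp
  rw [hmat, Matrix.det_submatrix_equiv_self]
  exact le_vandSup _ (fun i' => z (e.symm i')) fun i' => hz _

lemma vandSup_split {S α β : Type*} [Fintype α] [Fintype β] [DecidableEq α]
    [DecidableEq β] {τ : Set S} (m : α ⊕ β → S → ℂ) :
    vandSup τ m ≤ (Nat.factorial (Fintype.card α + Fintype.card β) : ℝ≥0∞)
      * vandSup τ (fun a => m (Sum.inl a)) * vandSup τ (fun b => m (Sum.inr b)) := by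
  refine vandSup_le fun z hz => ?_
  have h := det_split_nnnorm_le (Matrix.of fun i j : α ⊕ β => m j (z i))
  rw [← ENNReal.coe_le_coe] at h
  refine h.trans ?_
  push_cast
  calc ∑ π : Equiv.Perm (α ⊕ β),
        (‖(Matrix.of fun a a' : α =>
            (Matrix.of fun i j : α ⊕ β => m j (z i)) (π (Sum.inl a)) (Sum.inl a')).det‖₊
          * ‖(Matrix.of fun b b' : β =>
            (Matrix.of fun i j : α ⊕ β => m j (z i)) (π (Sum.inr b)) (Sum.inr b')).det‖₊
          : ℝ≥0∞)
      ≤ ∑ _π : Equiv.Perm (α ⊕ β),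
          vandSup τ (fun a => m (Sum.inl a)) * vandSup τ (fun b => m (Sum.inr b)) := by
        refine Finset.sum_le_sum fun π _ => mul_le_mul' ?_ ?_
        · exact le_vandSup (fun a => m (Sum.inl a))
            (fun a => z (π (Sum.inl a))) (fun a => hz _)
        · exact le_vandSup (fun b => m (Sum.inr b))
            (fun b => z (π (Sum.inr b))) (fun b => hz _)
    _ = (Nat.factorial (Fintype.card α + Fintype.card β) : ℝ≥0∞)
          * vandSup τ (fun a => m (Sum.inl a)) * vandSup τ (fun b => m (Sum.inr b)) := by
        rw [Finset.sum_const, Finset.card_univ, Fintype.card_perm, Fintype.card_sum,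
          nsmul_eq_mul, mul_assoc]

lemma vandSup_transform {S S' ι ι' : Type*} [Fintype ι] [DecidableEq ι]
    [Fintype ι'] [DecidableEq ι'] {τ : Set S} (φ : S → S') (g : ι ≃ ι')
    (m : ι → S → ℂ) (m' : ι' → S' → ℂ) (d : S → ℂ) (c : ℝ≥0)
    (hd : ∀ s ∈ τ, ‖d s‖₊ ≤ c)
    (h : ∀ (j : ι) (s : S), s ∈ τ → m j s = d s * m' (g j) (φ s)) :
    vandSup τ m ≤ (c : ℝ≥0∞) ^ (Fintype.card ι) * vandSup (φ '' τ) m' := by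
  refine vandSup_le fun z hz => ?_
  have hmat : (Matrix.of fun i j : ι => m j (z i))
      = Matrix.diagonal (fun i => d (z i))
        * ((Matrix.of fun i' j' : ι' => m' j' (φ (z (g.symm i')))).submatrix g g) := by
    ext i j
    rw [Matrix.diagonal_mul]
    simp only [Matrix.of_apply, Matrix.submatrix_apply, Equiv.symm_apply_apply]
    exact h j (z i) (hz i)
  rw [hmat, Matrix.det_mul, nnnorm_mul, Matrix.det_diagonal, nnnorm_prod,
    Matrix.det_submatrix_equiv_self]
  push_cast
  refine mul_le_mul' ?_ (le_vandSup _ (fun i' => φ (z (g.symm i')))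
    (fun i' => Set.mem_image_of_mem _ (hz _)))
  calc (∏ i : ι, (‖d (z i)‖₊ : ℝ≥0∞)) ≤ ∏ _i : ι, (c : ℝ≥0∞) :=
        Finset.prod_le_prod' fun i _ => by exact_mod_cast hd _ (hz i)
    _ = (c : ℝ≥0∞) ^ (Fintype.card ι) := by
        rw [Finset.prod_const, Finset.card_univ]

lemma key_bound (τ : Set (ℂ × ℂ)) (c : ℝ≥0) (hc : 1 ≤ c)
    (hτ : ∀ z ∈ τ, ‖(z : ℂ × ℂ).1‖₊ ≤ c ∧ ‖(z : ℂ × ℂ).2‖₊ ≤ c) (n : ℕ) :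
    vandSup τ (fun p : Fin n × Fin n => fun z : ℂ × ℂ =>
        z.1 ^ (p.1 : ℕ) * z.2 ^ (p.2 : ℕ))
      ≤ (Nat.factorial (n ^ 2) : ℝ≥0∞) * (c : ℝ≥0∞) ^ (n ^ 2)
        * vandSup ((fun z : ℂ × ℂ => (z.1 * z.2, z.1)) '' τ)
            (fun p : {p : Fin n × Fin n // (p.1 : ℕ) + (p.2 : ℕ) < n} =>
              fun z : ℂ × ℂ => z.1 ^ (p.1.1 : ℕ) * z.2 ^ (p.1.2 : ℕ))
        * vandSup ((fun z : ℂ × ℂ => (z.1 * z.2, z.2)) '' τ)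
            (fun p : {p : Fin (n-1) × Fin (n-1) // (p.1 : ℕ) + (p.2 : ℕ) < n - 1} =>
              fun z : ℂ × ℂ => z.1 ^ (p.1.1 : ℕ) * z.2 ^ (p.1.2 : ℕ)) := by
  have hE : ∀ i : Fin n × Fin n,
      ((Equiv.sumCompl (fun p : Fin n × Fin n => (p.2 : ℕ) ≤ (p.1 : ℕ)))
        ((Equiv.sumCompl (fun p : Fin n × Fin n => (p.2 : ℕ) ≤ (p.1 : ℕ))).symm i)) = i :=
    fun i => Equiv.apply_symm_apply _ i
  set E := Equiv.sumCompl (fun p : Fin n × Fin n => (p.2 : ℕ) ≤ (p.1 : ℕ)) with hEdef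
  -- reindex the square family over the two triangles
  have step1 : vandSup τ (fun p : Fin n × Fin n => fun z : ℂ × ℂ =>
        z.1 ^ (p.1 : ℕ) * z.2 ^ (p.2 : ℕ))
      ≤ vandSup τ (fun j : {p : Fin n × Fin n // (p.2 : ℕ) ≤ (p.1 : ℕ)}
          ⊕ {p : Fin n × Fin n // ¬ ((p.2 : ℕ) ≤ (p.1 : ℕ))} => fun z : ℂ × ℂ =>
        z.1 ^ ((E j).1 : ℕ) * z.2 ^ ((E j).2 : ℕ)) := by
    have : (fun p : Fin n × Fin n => fun z : ℂ × ℂ =>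
          z.1 ^ (p.1 : ℕ) * z.2 ^ (p.2 : ℕ))
        = fun i : Fin n × Fin n => (fun j => fun z : ℂ × ℂ =>
            z.1 ^ ((E j).1 : ℕ) * z.2 ^ ((E j).2 : ℕ)) (E.symm i) := by
      funext i
      show _ = fun z : ℂ × ℂ =>
        z.1 ^ ((E (E.symm i)).1 : ℕ) * z.2 ^ ((E (E.symm i)).2 : ℕ)
      rw [hE i]
    rw [this]
    exact vandSup_reindex_le E.symm (fun j => fun z : ℂ × ℂ =>
      z.1 ^ ((E j).1 : ℕ) * z.2 ^ ((E j).2 : ℕ))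
  have step2 := vandSup_split (τ := τ)
    (fun j : {p : Fin n × Fin n // (p.2 : ℕ) ≤ (p.1 : ℕ)}
        ⊕ {p : Fin n × Fin n // ¬ ((p.2 : ℕ) ≤ (p.1 : ℕ))} => fun z : ℂ × ℂ =>
      z.1 ^ ((E j).1 : ℕ) * z.2 ^ ((E j).2 : ℕ))
  have step3 : vandSup τ (fun a : {p : Fin n × Fin n // (p.2 : ℕ) ≤ (p.1 : ℕ)} =>
        fun z : ℂ × ℂ => z.1 ^ ((E (Sum.inl a)).1 : ℕ) * z.2 ^ ((E (Sum.inl a)).2 : ℕ))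
      ≤ vandSup ((fun z : ℂ × ℂ => (z.1 * z.2, z.1)) '' τ)
          (fun p : {p : Fin n × Fin n // (p.1 : ℕ) + (p.2 : ℕ) < n} =>
            fun z : ℂ × ℂ => z.1 ^ (p.1.1 : ℕ) * z.2 ^ (p.1.2 : ℕ)) := by
    have h := vandSup_transform (τ := τ) (fun z : ℂ × ℂ => (z.1 * z.2, z.1))
      (txEquiv n)
      (fun a : {p : Fin n × Fin n // (p.2 : ℕ) ≤ (p.1 : ℕ)} =>
        fun z : ℂ × ℂ => z.1 ^ ((E (Sum.inl a)).1 : ℕ) * z.2 ^ ((E (Sum.inl a)).2 : ℕ))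
      (fun p : {p : Fin n × Fin n // (p.1 : ℕ) + (p.2 : ℕ) < n} =>
        fun z : ℂ × ℂ => z.1 ^ (p.1.1 : ℕ) * z.2 ^ (p.1.2 : ℕ))
      (fun _ => 1) 1 (fun s _ => by simp)
      (fun j s _ => by
        have hj : (E (Sum.inl j) : Fin n × Fin n) = j.1 := by
          simp [hEdef]
        beta_reduce
        rw [hj, one_mul]
        have e1 : ((((txEquiv n) j).1.1 : Fin n) : ℕ) = (j.1.2 : ℕ) := rfl
        have e2 : ((((txEquiv n) j).1.2 : Fin n) : ℕ)
            = (j.1.1 : ℕ) - (j.1.2 : ℕ) := rfl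
        rw [e1, e2]
        exact pow_split1 _ _ _ _ j.2)
    refine le_trans h ?_
    simp
  have step4 : vandSup τ (fun b : {p : Fin n × Fin n // ¬ ((p.2 : ℕ) ≤ (p.1 : ℕ))} =>
        fun z : ℂ × ℂ => z.1 ^ ((E (Sum.inr b)).1 : ℕ) * z.2 ^ ((E (Sum.inr b)).2 : ℕ))
      ≤ (c : ℝ≥0∞) ^ (n ^ 2)
        * vandSup ((fun z : ℂ × ℂ => (z.1 * z.2, z.2)) '' τ)
          (fun p : {p : Fin (n-1) × Fin (n-1) // (p.1 : ℕ) + (p.2 : ℕ) < n - 1} =>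
            fun z : ℂ × ℂ => z.1 ^ (p.1.1 : ℕ) * z.2 ^ (p.1.2 : ℕ)) := by
    have h := vandSup_transform (τ := τ) (fun z : ℂ × ℂ => (z.1 * z.2, z.2))
      (tyEquiv n)
      (fun b : {p : Fin n × Fin n // ¬ ((p.2 : ℕ) ≤ (p.1 : ℕ))} =>
        fun z : ℂ × ℂ => z.1 ^ ((E (Sum.inr b)).1 : ℕ) * z.2 ^ ((E (Sum.inr b)).2 : ℕ))
      (fun p : {p : Fin (n-1) × Fin (n-1) // (p.1 : ℕ) + (p.2 : ℕ) < n - 1} =>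
        fun z : ℂ × ℂ => z.1 ^ (p.1.1 : ℕ) * z.2 ^ (p.1.2 : ℕ))
      (fun s => s.2) c (fun s hs => (hτ s hs).2)
      (fun j s _ => by
        have hj : (E (Sum.inr j) : Fin n × Fin n) = j.1 := by
          simp [hEdef]
        beta_reduce
        rw [hj]
        have e1 : ((((tyEquiv n) j).1.1 : Fin (n-1)) : ℕ) = (j.1.1 : ℕ) := rfl
        have e2 : ((((tyEquiv n) j).1.2 : Fin (n-1)) : ℕ)
            = (j.1.2 : ℕ) - (j.1.1 : ℕ) - 1 := rfl
        rw [e1, e2]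
        have hlt : (j.1.1 : ℕ) < (j.1.2 : ℕ) := by
          have := j.2
          omega
        exact pow_split2 _ _ _ _ hlt)
    refine le_trans h ?_
    refine mul_le_mul' ?_ le_rfl
    have hk : Fintype.card {p : Fin n × Fin n // ¬ ((p.2 : ℕ) ≤ (p.1 : ℕ))} ≤ n ^ 2 := by
      have h1 := Fintype.card_subtype_le (fun p : Fin n × Fin n => ¬ ((p.2 : ℕ) ≤ (p.1 : ℕ)))
      simpa [sq] using h1
    have hc' : (1 : ℝ≥0∞) ≤ (c : ℝ≥0∞) := by exact_mod_cast hc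
    exact pow_le_pow_right₀ hc' hk
  have hcard : Fintype.card {p : Fin n × Fin n // (p.2 : ℕ) ≤ (p.1 : ℕ)}
      + Fintype.card {p : Fin n × Fin n // ¬ ((p.2 : ℕ) ≤ (p.1 : ℕ))} = n ^ 2 := by
    rw [← Fintype.card_sum, Fintype.card_congr E]
    simp [sq]
  calc vandSup τ (fun p : Fin n × Fin n => fun z : ℂ × ℂ =>
        z.1 ^ (p.1 : ℕ) * z.2 ^ (p.2 : ℕ))
      ≤ vandSup τ (fun j => fun z : ℂ × ℂ =>
          z.1 ^ ((E j).1 : ℕ) * z.2 ^ ((E j).2 : ℕ)) := step1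
    _ ≤ _ := step2
    _ ≤ (Nat.factorial (n ^ 2) : ℝ≥0∞)
          * vandSup ((fun z : ℂ × ℂ => (z.1 * z.2, z.1)) '' τ)
            (fun p : {p : Fin n × Fin n // (p.1 : ℕ) + (p.2 : ℕ) < n} =>
              fun z : ℂ × ℂ => z.1 ^ (p.1.1 : ℕ) * z.2 ^ (p.1.2 : ℕ))
          * ((c : ℝ≥0∞) ^ (n ^ 2)
            * vandSup ((fun z : ℂ × ℂ => (z.1 * z.2, z.2)) '' τ)
              (fun p : {p : Fin (n-1) × Fin (n-1) // (p.1 : ℕ) + (p.2 : ℕ) < n - 1} =>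
                fun z : ℂ × ℂ => z.1 ^ (p.1.1 : ℕ) * z.2 ^ (p.1.2 : ℕ))) := by
        rw [hcard]
        exact mul_le_mul' (mul_le_mul' le_rfl step3) step4
    _ = _ := by ring

lemma tendsto_log_div_sub_one :
    Tendsto (fun n : ℕ => Real.log n / ((n : ℝ) - 1)) atTop (𝓝 0) := by
  have h := Real.tendsto_pow_log_div_mul_add_atTop 1 (-1) 1 one_ne_zero
  simp only [pow_one, one_mul] at h
  have h2 : Tendsto (fun x : ℝ => Real.log x / (x - 1)) atTop (𝓝 0) := by
    refine h.congr fun x => ?_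
    rw [sub_eq_add_neg]
  exact h2.comp tendsto_natCast_atTop_atTop

lemma tendsto_inv_sub_one :
    Tendsto (fun n : ℕ => ((n : ℝ) - 1)⁻¹) atTop (𝓝 0) := by
  have h : Tendsto (fun n : ℕ => (n : ℝ) - 1) atTop atTop := by
    have := tendsto_atTop_add_const_right atTop (-1 : ℝ)
      (tendsto_natCast_atTop_atTop (R := ℝ))
    simpa [sub_eq_add_neg] using this
  exact h.inv_tendsto_atTop

lemma lemQ {X : ℝ≥0∞} (hX0 : X ≠ 0) (hXt : X ≠ ⊤) {p : ℕ → ℝ} {t : ℝ}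
    (hp : Tendsto p atTop (𝓝 t)) :
    Tendsto (fun n => X ^ (p n)) atTop (𝓝 (X ^ t)) := by
  set x := X.toNNReal with hxdef
  have hx : X = ((x : ℝ≥0) : ℝ≥0∞) := (ENNReal.coe_toNNReal hXt).symm
  have hx0 : (0 : ℝ) < (x : ℝ) := by
    have : x ≠ 0 := by
      simp only [hxdef, ne_eq, ENNReal.toNNReal_eq_zero_iff]
      tauto
    positivity
  have key : ∀ s : ℝ, X ^ s = ENNReal.ofReal (Real.exp (Real.log x * s)) := by
    intro s
    rw [hx, ← ENNReal.ofReal_coe_nnreal, ENNReal.ofReal_rpow_of_pos hx0,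
      Real.rpow_def_of_pos hx0]
  simp only [key]
  exact (ENNReal.continuous_ofReal.tendsto _).comp
    ((Real.continuous_exp.tendsto _).comp (hp.const_mul _))

lemma lemP {u : ℕ → ℝ≥0} {p : ℕ → ℝ}
    (hu : ∀ᶠ n in atTop, 1 ≤ u n)
    (hlog : Tendsto (fun n => Real.log (u n) * p n) atTop (𝓝 0)) :
    Tendsto (fun n => ((u n : ℝ≥0∞)) ^ (p n)) atTop (𝓝 1) := by
  have heq : (fun n => ENNReal.ofReal (Real.exp (Real.log (u n) * p n)))
      =ᶠ[atTop] fun n => ((u n : ℝ≥0∞)) ^ (p n) := by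
    filter_upwards [hu] with n hn
    have hpos : (0 : ℝ) < (u n : ℝ) := by
      have : (1 : ℝ) ≤ (u n : ℝ) := by exact_mod_cast hn
      linarith
    rw [← ENNReal.ofReal_coe_nnreal, ENNReal.ofReal_rpow_of_pos hpos,
      Real.rpow_def_of_pos hpos]
  have h1 : Tendsto (fun n => ENNReal.ofReal (Real.exp (Real.log (u n) * p n)))
      atTop (𝓝 1) := by
    have := (ENNReal.continuous_ofReal.tendsto _).comp
      ((Real.continuous_exp.tendsto _).comp hlog)
    simp only [Real.exp_zero, ENNReal.ofReal_one] at this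
    exact this
  exact h1.congr' heq

lemma tendsto_alpha :
    Tendsto (fun n : ℕ => ((n : ℝ) + 1) / (3 * (n : ℝ))) atTop (𝓝 (1/3 : ℝ)) := by
  have h : Tendsto (fun n : ℕ => 1/3 + 1/3 * (1 / (n : ℝ))) atTop (𝓝 (1/3 : ℝ)) := by
    have := (tendsto_one_div_atTop_nhds_zero_nat.const_mul (1/3 : ℝ)).const_add (1/3 : ℝ)
    simpa using this
  refine h.congr' ?_
  filter_upwards [eventually_ge_atTop 1] with n hn
  have : (n : ℝ) ≠ 0 := by positivity
  field_simp

lemma tendsto_beta :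
    Tendsto (fun n : ℕ => ((n : ℝ) - 2) / (3 * (n : ℝ))) atTop (𝓝 (1/3 : ℝ)) := by
  have h : Tendsto (fun n : ℕ => 1/3 + (-2/3) * (1 / (n : ℝ))) atTop (𝓝 (1/3 : ℝ)) := by
    have := (tendsto_one_div_atTop_nhds_zero_nat.const_mul (-2/3 : ℝ)).const_add (1/3 : ℝ)
    simpa using this
  refine h.congr' ?_
  filter_upwards [eventually_ge_atTop 1] with n hn
  have : (n : ℝ) ≠ 0 := by positivity
  field_simp
  ring

lemma sq_le_two_pow {n : ℕ} (hn : 4 ≤ n) : n ^ 2 ≤ 2 ^ n := by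
  induction n with
  | zero => omega
  | succ m ih =>
    rcases Nat.lt_or_ge m 4 with h | h
    · interval_cases m <;> first | omega | norm_num
    · have h1 := ih (by omega)
      have h2 : 2 * m + 1 ≤ m ^ 2 := by nlinarith
      calc (m + 1) ^ 2 = m ^ 2 + (2 * m + 1) := by ring
        _ ≤ 2 ^ m + 2 ^ m := by omega
        _ = 2 ^ (m + 1) := by rw [pow_succ]; ring

lemma cube_h_le_four {n : ℕ} (hn : 2 ≤ n) :
    ((n : ℝ) ^ 3) * (3 / ((n : ℝ) * ((n : ℝ) - 1) * ((n : ℝ) + 1))) ≤ 4 := by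
  have hn' : (2 : ℝ) ≤ (n : ℝ) := by exact_mod_cast hn
  have hD : (0 : ℝ) < (n : ℝ) * ((n : ℝ) - 1) * ((n : ℝ) + 1) :=
    mul_pos (mul_pos (by linarith) (by linarith)) (by linarith)
  rw [mul_div_assoc', div_le_iff₀ hD]
  have key : (0 : ℝ) ≤ (n : ℝ) * (((n : ℝ) - 2) * ((n : ℝ) + 2)) :=
    mul_nonneg (by linarith) (mul_nonneg (by linarith) (by linarith))
  nlinarith [key]

lemma h_nonneg {n : ℕ} (hn : 2 ≤ n) :
    (0 : ℝ) ≤ 3 / ((n : ℝ) * ((n : ℝ) - 1) * ((n : ℝ) + 1)) := by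
  have hn' : (2 : ℝ) ≤ (n : ℝ) := by exact_mod_cast hn
  have hD : (0 : ℝ) < (n : ℝ) * ((n : ℝ) - 1) * ((n : ℝ) + 1) :=
    mul_pos (mul_pos (by linarith) (by linarith)) (by linarith)
  positivity

lemma hom_seq_bounded (σ : Set (ℂ × ℂ)) (b : ℝ≥0) (hb : 1 ≤ b)
    (hσ : ∀ z ∈ σ, ‖(z : ℂ × ℂ).1‖₊ ≤ b ∧ ‖(z : ℂ × ℂ).2‖₊ ≤ b) {n : ℕ} (hn : 4 ≤ n) :
    vandSup σ (fun p : {p : Fin n × Fin n // (p.1 : ℕ) + (p.2 : ℕ) < n} =>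
        fun z : ℂ × ℂ => z.1 ^ (p.1.1 : ℕ) * z.2 ^ (p.1.2 : ℕ))
      ^ (3 / ((n : ℝ) * ((n : ℝ) - 1) * ((n : ℝ) + 1)))
      ≤ 16 * (b : ℝ≥0∞) ^ (4 : ℝ) := by
  set K := Fintype.card {p : Fin n × Fin n // (p.1 : ℕ) + (p.2 : ℕ) < n} with hK
  have hKle : K ≤ n ^ 2 := by
    have h1 := Fintype.card_subtype_le
      (fun p : Fin n × Fin n => (p.1 : ℕ) + (p.2 : ℕ) < n)
    simpa [sq, hK] using h1
  have hEnt : ∀ (j : {p : Fin n × Fin n // (p.1 : ℕ) + (p.2 : ℕ) < n}) (z : ℂ × ℂ),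
      z ∈ σ → ‖z.1 ^ (j.1.1 : ℕ) * z.2 ^ (j.1.2 : ℕ)‖₊ ≤ b ^ n := by
    intro j z hz
    rw [nnnorm_mul, nnnorm_pow, nnnorm_pow]
    calc ‖z.1‖₊ ^ (j.1.1 : ℕ) * ‖z.2‖₊ ^ (j.1.2 : ℕ)
        ≤ b ^ (j.1.1 : ℕ) * b ^ (j.1.2 : ℕ) :=
          mul_le_mul' (pow_le_pow_left₀ zero_le (hσ z hz).1 _)
            (pow_le_pow_left₀ zero_le (hσ z hz).2 _)
      _ = b ^ ((j.1.1 : ℕ) + (j.1.2 : ℕ)) := (pow_add b _ _).symm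
      _ ≤ b ^ n := pow_le_pow_right₀ hb (le_of_lt j.2)
  have hV := vandSup_le_of_bound (τ := σ) hEnt
  have hexp0 := h_nonneg (le_trans (by norm_num) hn)
  have hrpow := ENNReal.rpow_le_rpow hV hexp0
  refine le_trans hrpow ?_
  rw [ENNReal.mul_rpow_of_nonneg _ _ hexp0]
  have hfact : ((Nat.factorial K : ℕ) : ℝ≥0∞) ≤ (2 : ℝ≥0∞) ^ (n ^ 3) := by
    have h1 : Nat.factorial K ≤ 2 ^ (n ^ 3) := by
      calc Nat.factorial K ≤ K ^ K := Nat.factorial_le_pow K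
        _ ≤ (n ^ 2) ^ K := Nat.pow_le_pow_left hKle K
        _ ≤ (n ^ 2) ^ (n ^ 2) := Nat.pow_le_pow_right (by positivity) hKle
        _ ≤ (2 ^ n) ^ (n ^ 2) := Nat.pow_le_pow_left (sq_le_two_pow hn) _
        _ = 2 ^ (n ^ 3) := by rw [← pow_mul]; ring_nf
    calc ((Nat.factorial K : ℕ) : ℝ≥0∞) ≤ ((2 ^ (n ^ 3) : ℕ) : ℝ≥0∞) := by
          exact_mod_cast h1
      _ = (2 : ℝ≥0∞) ^ (n ^ 3) := by push_cast; rfl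
  have h16 : ((2 : ℝ≥0∞) ^ (n ^ 3)) ^ (3 / ((n : ℝ) * ((n : ℝ) - 1) * ((n : ℝ) + 1)))
      ≤ 16 := by
    rw [← ENNReal.rpow_natCast 2 (n ^ 3), ← ENNReal.rpow_mul]
    have : ((n ^ 3 : ℕ) : ℝ) * (3 / ((n : ℝ) * ((n : ℝ) - 1) * ((n : ℝ) + 1))) ≤ 4 := by
      push_cast
      exact cube_h_le_four (le_trans (by norm_num) hn)
    calc (2 : ℝ≥0∞) ^ (((n ^ 3 : ℕ) : ℝ) * (3 / ((n : ℝ) * ((n : ℝ) - 1) * ((n : ℝ) + 1))))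
        ≤ (2 : ℝ≥0∞) ^ (4 : ℝ) := ENNReal.rpow_le_rpow_of_exponent_le (by norm_num) this
      _ = 16 := by
          rw [show (4 : ℝ) = ((4 : ℕ) : ℝ) by norm_num, ENNReal.rpow_natCast]
          norm_num
  have hbpow : (((b ^ n : ℝ≥0) : ℝ≥0∞) ^ K) ^ (3 / ((n : ℝ) * ((n : ℝ) - 1) * ((n : ℝ) + 1)))
      ≤ (b : ℝ≥0∞) ^ (4 : ℝ) := by
    have h1 : (((b ^ n : ℝ≥0) : ℝ≥0∞) ^ K) = (b : ℝ≥0∞) ^ (n * K) := by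
      push_cast
      rw [← pow_mul]
    rw [h1, ← ENNReal.rpow_natCast (b : ℝ≥0∞) (n * K), ← ENNReal.rpow_mul]
    have hb1 : (1 : ℝ≥0∞) ≤ (b : ℝ≥0∞) := by exact_mod_cast hb
    refine ENNReal.rpow_le_rpow_of_exponent_le hb1 ?_
    have hnK : ((n * K : ℕ) : ℝ) ≤ ((n : ℝ) ^ 3) := by
      have : n * K ≤ n ^ 3 := by
        calc n * K ≤ n * n ^ 2 := Nat.mul_le_mul_left n hKle
          _ = n ^ 3 := by ring
      exact_mod_cast this
    calc ((n * K : ℕ) : ℝ) * (3 / ((n : ℝ) * ((n : ℝ) - 1) * ((n : ℝ) + 1)))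
        ≤ ((n : ℝ) ^ 3) * (3 / ((n : ℝ) * ((n : ℝ) - 1) * ((n : ℝ) + 1))) :=
          mul_le_mul_of_nonneg_right hnK (h_nonneg (le_trans (by norm_num) hn))
      _ ≤ 4 := cube_h_le_four (le_trans (by norm_num) hn)
  exact mul_le_mul' (le_trans (ENNReal.rpow_le_rpow hfact hexp0) h16) hbpow

end Auxiliary

open scoped NNReal Topology in
/-- For a bounded set `τ ⊆ ℂ²` and the maps `φ_x(x, y) = (xy, x)`
and `φ_y(x, y) = (xy, y)`:
`Sup^rec(τ) ≤ (Sup^hom(φ_x(τ)))^{1/3} · (Sup^hom(φ_y(τ)))^{1/3}`. -/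
theorem supRec_le_supHom_phix_phiy (τ : Set (ℂ × ℂ)) (hτ : Bornology.IsBounded τ) :
    supRec τ
      ≤ (supHom ((fun z : ℂ × ℂ => (z.1 * z.2, z.1)) '' τ)) ^ (1 / 3 : ℝ)
          * (supHom ((fun z : ℂ × ℂ => (z.1 * z.2, z.2)) '' τ)) ^ (1 / 3 : ℝ) := by
  obtain ⟨r, hr⟩ := hτ.subset_closedBall 0
  set c : ℝ≥0 := 1 ⊔ r.toNNReal with hcdef
  have hc1 : (1 : ℝ≥0) ≤ c := le_sup_left
  have hτc : ∀ z ∈ τ, ‖(z : ℂ × ℂ).1‖₊ ≤ c ∧ ‖(z : ℂ × ℂ).2‖₊ ≤ c := by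
    intro z hz
    have h1 : ‖z‖ ≤ r := by
      have := hr hz
      rwa [Metric.mem_closedBall, dist_zero_right] at this
    have h2 : ‖z‖₊ ≤ c := by
      have h3 : ‖z‖ ≤ (c : ℝ) := by
        refine h1.trans ((Real.le_coe_toNNReal r).trans ?_)
        exact_mod_cast le_sup_right (a := (1 : ℝ≥0))
      exact_mod_cast h3
    constructor
    · exact le_trans (by exact_mod_cast norm_fst_le z) h2
    · exact le_trans (by exact_mod_cast norm_snd_le z) h2
  set σx := (fun z : ℂ × ℂ => (z.1 * z.2, z.1)) '' τ with hσxdef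
  set σy := (fun z : ℂ × ℂ => (z.1 * z.2, z.2)) '' τ with hσydef
  set b : ℝ≥0 := c * c with hbdef
  have hb1 : (1 : ℝ≥0) ≤ b := by
    calc (1 : ℝ≥0) = 1 * 1 := (one_mul 1).symm
      _ ≤ c * c := mul_le_mul' hc1 hc1
  have hσxb : ∀ w ∈ σx, ‖(w : ℂ × ℂ).1‖₊ ≤ b ∧ ‖(w : ℂ × ℂ).2‖₊ ≤ b := by
    rintro w ⟨z, hz, rfl⟩
    obtain ⟨h1, h2⟩ := hτc z hz
    constructor
    · calc ‖z.1 * z.2‖₊ = ‖z.1‖₊ * ‖z.2‖₊ := nnnorm_mul _ _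
        _ ≤ c * c := mul_le_mul' h1 h2
    · calc ‖z.1‖₊ ≤ c := h1
        _ ≤ c * c := le_mul_of_one_le_left zero_le hc1
  have hσyb : ∀ w ∈ σy, ‖(w : ℂ × ℂ).1‖₊ ≤ b ∧ ‖(w : ℂ × ℂ).2‖₊ ≤ b := by
    rintro w ⟨z, hz, rfl⟩
    obtain ⟨h1, h2⟩ := hτc z hz
    constructor
    · calc ‖z.1 * z.2‖₊ = ‖z.1‖₊ * ‖z.2‖₊ := nnnorm_mul _ _
        _ ≤ c * c := mul_le_mul' h1 h2
    · calc ‖z.2‖₊ ≤ c := h2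
        _ ≤ c * c := le_mul_of_one_le_left zero_le hc1
  -- finiteness of the two homogeneous diameters
  have hD_ne_top : (16 : ℝ≥0∞) * (b : ℝ≥0∞) ^ (4 : ℝ) ≠ ⊤ :=
    ENNReal.mul_ne_top (by norm_num)
      (ENNReal.rpow_ne_top_of_nonneg (by norm_num) ENNReal.coe_ne_top)
  have hA_le : supHom σx ≤ 16 * (b : ℝ≥0∞) ^ (4 : ℝ) :=
    limsup_le_of_le (by isBoundedDefault)
      (eventually_atTop.2 ⟨4, fun n hn => hom_seq_bounded σx b hb1 hσxb hn⟩)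
  have hB_le : supHom σy ≤ 16 * (b : ℝ≥0∞) ^ (4 : ℝ) :=
    limsup_le_of_le (by isBoundedDefault)
      (eventually_atTop.2 ⟨4, fun n hn => hom_seq_bounded σy b hb1 hσyb hn⟩)
  have hAtop : supHom σx ≠ ⊤ := ne_top_of_le_ne_top hD_ne_top hA_le
  have hBtop : supHom σy ≠ ⊤ := ne_top_of_le_ne_top hD_ne_top hB_le
  -- main estimate with a positive slack ε = 1/(k+1)
  have H : ∀ k : ℕ, supRec τ
      ≤ (supHom σx + ((k : ℝ≥0∞) + 1)⁻¹) ^ (1/3 : ℝ)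
        * (supHom σy + ((k : ℝ≥0∞) + 1)⁻¹) ^ (1/3 : ℝ) := by
    intro k
    set ε : ℝ≥0∞ := ((k : ℝ≥0∞) + 1)⁻¹ with hεdef
    have hε0 : ε ≠ 0 := by
      simp [hεdef]
    have hεtop : ε ≠ ⊤ := by
      simp [hεdef]
    set X := supHom σx + ε with hXdef
    set Y := supHom σy + ε with hYdef
    have hX0 : X ≠ 0 := by
      simp [hXdef, hε0]
    have hY0 : Y ≠ 0 := by
      simp [hYdef, hε0]
    have hXtop : X ≠ ⊤ := ENNReal.add_ne_top.2 ⟨hAtop, hεtop⟩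
    have hYtop : Y ≠ ⊤ := ENNReal.add_ne_top.2 ⟨hBtop, hεtop⟩
    have hevA : ∀ᶠ n in atTop,
        vandSup σx (fun p : {p : Fin n × Fin n // (p.1 : ℕ) + (p.2 : ℕ) < n} =>
            fun z : ℂ × ℂ => z.1 ^ (p.1.1 : ℕ) * z.2 ^ (p.1.2 : ℕ))
          ^ (3 / ((n : ℝ) * ((n : ℝ) - 1) * ((n : ℝ) + 1))) < X :=
      eventually_lt_of_limsup_lt (ENNReal.lt_add_right hAtop hε0)
    have hevB : ∀ᶠ n in atTop,
        vandSup σy (fun p : {p : Fin n × Fin n // (p.1 : ℕ) + (p.2 : ℕ) < n} =>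
            fun z : ℂ × ℂ => z.1 ^ (p.1.1 : ℕ) * z.2 ^ (p.1.2 : ℕ))
          ^ (3 / ((n : ℝ) * ((n : ℝ) - 1) * ((n : ℝ) + 1))) < Y :=
      eventually_lt_of_limsup_lt (ENNReal.lt_add_right hBtop hε0)
    have hevB' : ∀ᶠ n in atTop,
        vandSup σy (fun p : {p : Fin (n-1) × Fin (n-1) //
              (p.1 : ℕ) + (p.2 : ℕ) < n - 1} =>
            fun z : ℂ × ℂ => z.1 ^ (p.1.1 : ℕ) * z.2 ^ (p.1.2 : ℕ))
          ^ (3 / (((n-1 : ℕ) : ℝ) * (((n-1 : ℕ) : ℝ) - 1) * (((n-1 : ℕ) : ℝ) + 1))) < Y := by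
      obtain ⟨N, hN⟩ := eventually_atTop.1 hevB
      exact eventually_atTop.2 ⟨N + 1, fun n hn => hN (n - 1) (by omega)⟩
    set F : ℕ → ℝ≥0∞ := fun n =>
      ((Nat.factorial (n ^ 2) : ℝ≥0∞) * (c : ℝ≥0∞) ^ (n ^ 2))
        ^ (1 / ((n : ℝ) ^ 2 * ((n : ℝ) - 1))) with hFdef
    set G : ℕ → ℝ≥0∞ := fun n =>
      F n * X ^ (((n : ℝ) + 1) / (3 * (n : ℝ))) * Y ^ (((n : ℝ) - 2) / (3 * (n : ℝ)))
      with hGdef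
    have hevMain : ∀ᶠ n in atTop,
        vandSup τ (fun p : Fin n × Fin n => fun z : ℂ × ℂ =>
            z.1 ^ (p.1 : ℕ) * z.2 ^ (p.2 : ℕ))
          ^ (1 / ((n : ℝ) ^ 2 * ((n : ℝ) - 1))) ≤ G n := by
      filter_upwards [hevA, hevB', eventually_ge_atTop 3] with n han hbn hn3
      have hn' : (3 : ℝ) ≤ (n : ℝ) := by exact_mod_cast hn3
      have hnpos : (0 : ℝ) < (n : ℝ) := by linarith
      have hn1 : (0 : ℝ) < (n : ℝ) - 1 := by linarith
      have hn2 : (0 : ℝ) < (n : ℝ) - 2 := by linarith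
      have he0 : (0 : ℝ) ≤ 1 / ((n : ℝ) ^ 2 * ((n : ℝ) - 1)) := by positivity
      have hα0 : (0 : ℝ) ≤ ((n : ℝ) + 1) / (3 * (n : ℝ)) := by positivity
      have hβ0 : (0 : ℝ) ≤ ((n : ℝ) - 2) / (3 * (n : ℝ)) := by positivity
      have hcastn : ((n - 1 : ℕ) : ℝ) = (n : ℝ) - 1 := by
        rw [Nat.cast_sub (by omega)]
        norm_num
      have step1 := key_bound τ c hc1 hτc n
      have step2 := ENNReal.rpow_le_rpow step1 he0
      refine le_trans step2 ?_
      rw [ENNReal.mul_rpow_of_nonneg _ _ he0, ENNReal.mul_rpow_of_nonneg _ _ he0]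
      rw [hGdef]
      refine mul_le_mul' (mul_le_mul' le_rfl ?_) ?_
      · -- x-part
        have hid : (1 : ℝ) / ((n : ℝ) ^ 2 * ((n : ℝ) - 1))
            = (3 / ((n : ℝ) * ((n : ℝ) - 1) * ((n : ℝ) + 1)))
              * (((n : ℝ) + 1) / (3 * (n : ℝ))) := by
          field_simp
        rw [hid, ENNReal.rpow_mul]
        exact ENNReal.rpow_le_rpow (le_of_lt han) hα0
      · -- y-part
        have hid : (1 : ℝ) / ((n : ℝ) ^ 2 * ((n : ℝ) - 1))
            = (3 / (((n-1 : ℕ) : ℝ) * (((n-1 : ℕ) : ℝ) - 1) * (((n-1 : ℕ) : ℝ) + 1)))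
              * (((n : ℝ) - 2) / (3 * (n : ℝ))) := by
          rw [hcastn]
          have h1 : (n : ℝ) - 1 + 1 = (n : ℝ) := by ring
          have h2 : (n : ℝ) - 1 - 1 = (n : ℝ) - 2 := by ring
          rw [h1, h2]
          field_simp
        rw [hid, ENNReal.rpow_mul]
        exact ENNReal.rpow_le_rpow (le_of_lt hbn) hβ0
    -- the limit of the majorant
    have hFlim : Tendsto F atTop (𝓝 1) := by
      have hFeq : F = fun n =>
          (((Nat.factorial (n ^ 2) * c ^ (n ^ 2) : ℝ≥0) : ℝ≥0∞))
            ^ (1 / ((n : ℝ) ^ 2 * ((n : ℝ) - 1))) := by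
        funext n
        rw [hFdef]
        push_cast
        rfl
      rw [hFeq]
      refine lemP ?_ ?_
      · filter_upwards with n
        calc (1 : ℝ≥0) = 1 * 1 := (one_mul 1).symm
          _ ≤ (Nat.factorial (n ^ 2) : ℝ≥0) * c ^ (n ^ 2) := by
            refine mul_le_mul' ?_ (one_le_pow_of_one_le' hc1 _)
            exact_mod_cast Nat.one_le_iff_ne_zero.2 (Nat.factorial_ne_zero _)
      · -- squeeze of the logarithm term
        have hψ : Tendsto (fun n : ℕ =>
            (2 * Real.log n + Real.log c) / ((n : ℝ) - 1)) atTop (𝓝 0) := by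
          have h1 := (tendsto_log_div_sub_one.const_mul (2 : ℝ)).add
            (tendsto_inv_sub_one.const_mul (Real.log c))
          have h2 : (2 : ℝ) * 0 + Real.log c * 0 = 0 := by ring
          rw [h2] at h1
          refine h1.congr fun n => ?_
          field_simp
        refine tendsto_of_tendsto_of_tendsto_of_le_of_le' tendsto_const_nhds hψ ?_ ?_
        · filter_upwards [eventually_ge_atTop 2] with n hn2
          have hn' : (2 : ℝ) ≤ (n : ℝ) := by exact_mod_cast hn2
          have hn1 : (0 : ℝ) < (n : ℝ) - 1 := by linarith
          refine mul_nonneg (Real.log_nonneg ?_) (by positivity)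
          push_cast
          calc (1 : ℝ) = 1 * 1 := (one_mul 1).symm
            _ ≤ (Nat.factorial (n ^ 2) : ℝ) * (c : ℝ) ^ (n ^ 2) := by
              refine mul_le_mul ?_ ?_ (by norm_num) (by positivity)
              · exact_mod_cast Nat.one_le_iff_ne_zero.2 (Nat.factorial_ne_zero _)
              · exact_mod_cast one_le_pow_of_one_le' hc1 (n ^ 2)
        · filter_upwards [eventually_ge_atTop 2] with n hn2
          have hn' : (2 : ℝ) ≤ (n : ℝ) := by exact_mod_cast hn2
          have hnpos : (0 : ℝ) < (n : ℝ) := by linarith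
          have hn1 : (0 : ℝ) < (n : ℝ) - 1 := by linarith
          have he0 : (0 : ℝ) ≤ 1 / ((n : ℝ) ^ 2 * ((n : ℝ) - 1)) := by positivity
          have hlogu : Real.log ((Nat.factorial (n ^ 2) * c ^ (n ^ 2) : ℝ≥0) : ℝ)
              ≤ (n : ℝ) ^ 2 * (2 * Real.log n + Real.log c) := by
            have hfa : (0 : ℝ) < (Nat.factorial (n ^ 2) : ℝ) := by
              exact_mod_cast Nat.factorial_pos _
            have hcp : (0 : ℝ) < (c : ℝ) ^ (n ^ 2) := by positivity
            have hcoe : ((Nat.factorial (n ^ 2) * c ^ (n ^ 2) : ℝ≥0) : ℝ)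
                = (Nat.factorial (n ^ 2) : ℝ) * (c : ℝ) ^ (n ^ 2) := by push_cast; rfl
            rw [hcoe, Real.log_mul (ne_of_gt hfa) (ne_of_gt hcp), Real.log_pow]
            have hfle : Real.log (Nat.factorial (n ^ 2) : ℝ)
                ≤ (n : ℝ) ^ 2 * (2 * Real.log n) := by
              calc Real.log (Nat.factorial (n ^ 2) : ℝ)
                  ≤ Real.log (((n ^ 2 : ℕ) : ℝ) ^ (n ^ 2 : ℕ)) := by
                    refine Real.log_le_log hfa ?_
                    exact_mod_cast Nat.factorial_le_pow _
                _ = (n ^ 2 : ℕ) * Real.log ((n ^ 2 : ℕ) : ℝ) := Real.log_pow _ _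
                _ = (n : ℝ) ^ 2 * (2 * Real.log n) := by
                    push_cast
                    rw [Real.log_pow]
                    push_cast
                    ring
            have : ((n ^ 2 : ℕ) : ℝ) * Real.log c = (n : ℝ) ^ 2 * Real.log c := by
              push_cast; ring
            rw [this]
            nlinarith [hfle]
          calc Real.log ((Nat.factorial (n ^ 2) * c ^ (n ^ 2) : ℝ≥0) : ℝ)
                * (1 / ((n : ℝ) ^ 2 * ((n : ℝ) - 1)))
              ≤ ((n : ℝ) ^ 2 * (2 * Real.log n + Real.log c))
                * (1 / ((n : ℝ) ^ 2 * ((n : ℝ) - 1))) :=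
                mul_le_mul_of_nonneg_right hlogu he0
            _ = (2 * Real.log n + Real.log c) / ((n : ℝ) - 1) := by
                field_simp
    have hXlim := lemQ hX0 hXtop tendsto_alpha
    have hYlim := lemQ hY0 hYtop tendsto_beta
    have hXpos : 0 < X := pos_iff_ne_zero.2 hX0
    have T1 : Tendsto (fun n : ℕ => F n * X ^ (((n : ℝ) + 1) / (3 * (n : ℝ))))
        atTop (𝓝 (1 * X ^ (1/3 : ℝ))) :=
      ENNReal.Tendsto.mul hFlim (Or.inl one_ne_zero) hXlim (Or.inr ENNReal.one_ne_top)
    have T2 : Tendsto G atTop (𝓝 (1 * X ^ (1/3 : ℝ) * Y ^ (1/3 : ℝ))) :=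
      ENNReal.Tendsto.mul T1
        (Or.inl (by rw [one_mul]; exact (ENNReal.rpow_pos hXpos hXtop).ne'))
        hYlim
        (Or.inr (by rw [one_mul]
                    exact ENNReal.rpow_ne_top_of_nonneg (by norm_num) hXtop))
    have hGlimsup : limsup G atTop = X ^ (1/3 : ℝ) * Y ^ (1/3 : ℝ) := by
      have h := T2.limsup_eq
      rwa [one_mul] at h
    calc supRec τ ≤ limsup G atTop := limsup_le_limsup hevMain
      _ = X ^ (1/3 : ℝ) * Y ^ (1/3 : ℝ) := hGlimsup
  -- pass to the limit ε → 0
  have hinv : Tendsto (fun k : ℕ => ((k : ℝ≥0∞) + 1)⁻¹) atTop (𝓝 0) := by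
    have h0 := ENNReal.tendsto_inv_nat_nhds_zero
    have h1 := (tendsto_add_atTop_iff_nat 1).2 h0
    refine h1.congr fun k => ?_
    push_cast
    rfl
  have hXk : Tendsto (fun k : ℕ => supHom σx + ((k : ℝ≥0∞) + 1)⁻¹) atTop
      (𝓝 (supHom σx)) := by
    have h2 := hinv.const_add (supHom σx)
    simpa using h2
  have hYk : Tendsto (fun k : ℕ => supHom σy + ((k : ℝ≥0∞) + 1)⁻¹) atTop
      (𝓝 (supHom σy)) := by
    have h2 := hinv.const_add (supHom σy)
    simpa using h2
  have hcont := ENNReal.continuous_rpow_const (y := (1/3 : ℝ))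
  have hT : Tendsto (fun k : ℕ =>
      (supHom σx + ((k : ℝ≥0∞) + 1)⁻¹) ^ (1/3 : ℝ)
        * (supHom σy + ((k : ℝ≥0∞) + 1)⁻¹) ^ (1/3 : ℝ)) atTop
      (𝓝 (supHom σx ^ (1/3 : ℝ) * supHom σy ^ (1/3 : ℝ))) :=
    ENNReal.Tendsto.mul ((hcont.tendsto _).comp hXk)
      (Or.inr (ENNReal.rpow_ne_top_of_nonneg (by norm_num) hBtop))
      ((hcont.tendsto _).comp hYk)
      (Or.inr (ENNReal.rpow_ne_top_of_nonneg (by norm_num) hAtop))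
  exact ge_of_tendsto hT (Eventually.of_forall H)
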